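/- (Proposition 6, stronger just-identified tests.) In the just-identified setting, maintain Assumptions 1 and 2 and the labeling normalization (Assumption 5): for every k ∈ {1,…,n} and every response type s with ℙ(S=s) > 0, either s_k ≡ 0, or s_k ≡ 1, or (s_k(v) = 1 ⟺ v = k). Then: (i) in the unordered case D_k = 1[T = k], for all reals y ≤ y′ the matrix Var(Z)^{-1}·Cov(Z, 1[y ≤ Y ≤ y′]·D) is diagonal with non-negative diagonal entries; and (ii) for any X : Ω → {0,1} with ℙ(X=1) > 0 and Z independent of (X,S), the matrix Var(Z | X=1)^{-1}·Cov(Z, D | X=1) is diagonal with non-negative diagonal entries (conditional moments under ℙ(· | X=1)). -/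

import Mathlib

open MeasureTheory ProbabilityTheory
open scoped ENNReal Classical

noncomputable section

variable {Ω : Type*} [MeasurableSpace Ω]

/-- Covariance of two real-valued random variables. -/
def covar (μ : Measure Ω) (X W : Ω → ℝ) : ℝ :=
  (∫ ω, X ω * W ω ∂μ) - (∫ ω, X ω ∂μ) * (∫ ω, W ω ∂μ)

/-- Covariance matrix of two random vectors. -/
def covarM (μ : Measure Ω) {a b : Type*} [Fintype a] [Fintype b]
    (X : Ω → a → ℝ) (W : Ω → b → ℝ) : Matrix a b ℝ :=
  Matrix.of fun i j => covar μ (fun ω => X ω i) (fun ω => W ω j)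

/-- Predicted treatments: the linear projection of `D` on `Z`,
`P = E[D] + Cov(D,Z)·Var(Z)⁻¹·(Z − E[Z])`. -/
def predT (μ : Measure Ω) {n m : ℕ} (D : Ω → Fin n → ℝ) (Z : Ω → Fin m → ℝ) :
    Ω → Fin n → ℝ :=
  fun ω k => (∫ ω', D ω' k ∂μ) +
    ∑ j, (covarM μ D Z * (covarM μ Z Z)⁻¹) k j * (Z ω j - ∫ ω', Z ω' j ∂μ)

/-- The residualized first instrument `P̃₁ = P₁ − (Cov(P₁,P₂)/Var(P₂))·P₂`
in the two-treatment case. -/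
def resid1 (μ : Measure Ω) {m : ℕ} (D : Ω → Fin 2 → ℝ) (Z : Ω → Fin m → ℝ) : Ω → ℝ :=
  fun ω => predT μ D Z ω 0 -
    (covar μ (fun ω' => predT μ D Z ω' 0) (fun ω' => predT μ D Z ω' 1) /
        covar μ (fun ω' => predT μ D Z ω' 1) (fun ω' => predT μ D Z ω' 1)) *
      predT μ D Z ω 1

/-- A square matrix is diagonal with non-negative diagonal entries. -/
def IsNonnegDiagonal {a : Type*} [DecidableEq a] (M : Matrix a a ℝ) : Prop :=
  (∀ i j, i ≠ j → M i j = 0) ∧ ∀ i, 0 ≤ M i i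

/-- (Proposition 6, stronger just-identified tests.) In the just-identified setting,
under Assumptions 1–2 and the labeling normalization (Assumption 5), (i) in the
unordered case, for all `y ≤ y'`, `Var(Z)⁻¹·Cov(Z, 1[y ≤ Y ≤ y']·D)` is non-negative
diagonal, and (ii) for any pre-determined binary `X`, `Var(Z|X=1)⁻¹·Cov(Z,D|X=1)` is
non-negative diagonal. -/
private lemma ind_eq_indicator {P : Ω → Prop} [DecidablePred P] :
    (fun ω => if P ω then (1:ℝ) else 0) = Set.indicator {ω | P ω} (fun _ => 1) := by
  ext ω; simp [Set.indicator_apply, Set.mem_setOf_eq]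

lemma integral_ind {ν : Measure Ω} {P : Ω → Prop} [DecidablePred P] (h : MeasurableSet {ω | P ω}) :
    ∫ ω, (if P ω then (1:ℝ) else 0) ∂ν = (ν {ω | P ω}).toReal := by
  rw [ind_eq_indicator, integral_indicator_const (1:ℝ) h, smul_eq_mul, mul_one]; rfl

lemma integrable_ind {ν : Measure Ω} [IsFiniteMeasure ν] {P : Ω → Prop} [DecidablePred P]
    (h : MeasurableSet {ω | P ω}) :
    Integrable (fun ω => if P ω then (1:ℝ) else 0) ν := by
  rw [ind_eq_indicator]; exact (integrable_const 1).indicator h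

lemma core_lemma {n : ℕ} (ν : Measure Ω) [IsProbabilityMeasure ν]
    (V : Ω → Fin (n+1)) (hV : Measurable V)
    (𝒮 : Finset (Fin (n+1) → Fin (n+1)))
    (S : Ω → Fin (n+1) → Fin (n+1)) (hS𝒮 : ∀ ω, S ω ∈ 𝒮)
    (hSmeas : ∀ s, MeasurableSet {ω | S ω = s})
    (R : Fin n → Finset (Fin (n+1)))
    (Z : Ω → Fin n → ℝ) (hZ : ∀ ω v, Z ω v = if V ω = Fin.succ v then (1:ℝ) else 0)
    (k : Fin n) (W : Ω → ℝ) (G : Ω → Prop)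
    (hGmeas : MeasurableSet {ω | G ω})
    (hW : ∀ ω, W ω = (if G ω then (1:ℝ) else 0) * (if S ω (V ω) ∈ R k then (1:ℝ) else 0))
    (M : (Fin (n+1) → Fin (n+1)) → ℝ≥0∞)
    (hfac : ∀ s ∈ 𝒮, ∀ u, s u ∈ R k →
       ν ({ω | V ω = u} ∩ {ω | S ω = s} ∩ {ω | G ω}) = ν {ω | V ω = u} * M s)
    (hd : ∀ s ∈ 𝒮, M s ≠ 0 →
       (∀ v, s v ∉ R k) ∨ (∀ v, s v ∈ R k) ∨ (∀ v, s v ∈ R k ↔ v = Fin.succ k)) :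
    ∃ c : ℝ, 0 ≤ c ∧ ∀ v, covar ν (fun ω => Z ω v) W =
      covar ν (fun ω => Z ω v) (fun ω => Z ω k) * c := by
  classical
  set q : Fin (n+1) → ℝ := fun u => (ν {ω | V ω = u}).toReal with hq
  have hVset : ∀ u : Fin (n+1), MeasurableSet {ω | V ω = u} :=
    fun u => hV (measurableSet_singleton u)
  -- ∫ Z_v
  have hZint : ∀ v : Fin n, ∫ ω, Z ω v ∂ν = q (Fin.succ v) := by
    intro v
    have h1 : (fun ω => Z ω v) = fun ω => if V ω = Fin.succ v then (1:ℝ) else 0 :=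
      funext fun ω => hZ ω v
    rw [h1, integral_ind (hVset _)]
  -- sum of q
  have hqsum : ∑ u : Fin (n+1), q u = 1 := by
    calc ∑ u : Fin (n+1), q u
        = ∑ u : Fin (n+1), ∫ ω, (if V ω = u then (1:ℝ) else 0) ∂ν :=
          Finset.sum_congr rfl (fun u _ => (integral_ind (hVset u)).symm)
      _ = ∫ ω, ∑ u : Fin (n+1), (if V ω = u then (1:ℝ) else 0) ∂ν :=
          (integral_finset_sum _ (fun u _ => integrable_ind (hVset u))).symm
      _ = ∫ _ω, (1:ℝ) ∂ν := by
          refine integral_congr_ae (Filter.Eventually.of_forall fun ω => ?_)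
          simp [eq_comm]
      _ = 1 := by simp
  -- basic measurable sets
  have hms : ∀ (u : Fin (n+1)) (s : Fin (n+1) → Fin (n+1)),
      MeasurableSet {ω | ((V ω = u ∧ S ω = s) ∧ G ω) ∧ s u ∈ R k} :=
    fun u s => (((hVset u).inter (hSmeas s)).inter hGmeas).inter (MeasurableSet.const _)
  have keyint : ∀ (u : Fin (n+1)) (s : Fin (n+1) → Fin (n+1)),
      Integrable (fun ω => if ((V ω = u ∧ S ω = s) ∧ G ω) ∧ s u ∈ R k then (1:ℝ) else 0) ν :=
    fun u s => integrable_ind (hms u s)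
  have key : ∀ (u : Fin (n+1)), ∀ s ∈ 𝒮,
      ∫ ω, (if ((V ω = u ∧ S ω = s) ∧ G ω) ∧ s u ∈ R k then (1:ℝ) else 0) ∂ν
        = q u * ((M s).toReal * (if s u ∈ R k then 1 else 0)) := by
    intro u s hs
    by_cases hc : s u ∈ R k
    · have hset : {ω | ((V ω = u ∧ S ω = s) ∧ G ω) ∧ s u ∈ R k}
          = {ω | V ω = u} ∩ {ω | S ω = s} ∩ {ω | G ω} := by
        ext ω
        simp [Set.mem_setOf_eq, Set.mem_inter_iff, hc, and_assoc]
      rw [integral_ind (hms u s), hset, hfac s hs u hc, ENNReal.toReal_mul, if_pos hc, mul_one]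
    · simp [hc]
  -- F
  set F : Fin (n+1) → ℝ :=
    fun u => ∑ s ∈ 𝒮, (M s).toReal * (if s u ∈ R k then (1:ℝ) else 0) with hF
  -- ∫ Z_v W
  have hI1 : ∀ v : Fin n, ∫ ω, Z ω v * W ω ∂ν = q (Fin.succ v) * F (Fin.succ v) := by
    intro v
    have hpt : (fun ω => Z ω v * W ω) = fun ω => ∑ s ∈ 𝒮,
        (if ((V ω = Fin.succ v ∧ S ω = s) ∧ G ω) ∧ s (Fin.succ v) ∈ R k then (1:ℝ) else 0) := by
      funext ω
      rw [Finset.sum_eq_single_of_mem (S ω) (hS𝒮 ω)]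
      · rw [hZ, hW]
        by_cases h1 : V ω = Fin.succ v
        · by_cases h2 : G ω <;> by_cases h3 : S ω (Fin.succ v) ∈ R k <;> simp [h1, h2, h3]
        · simp [h1]
      · intro s _ hne
        simp only [ite_eq_right_iff]
        intro hcond
        exact absurd hcond.1.1.2 (Ne.symm hne)
    rw [hpt, integral_finset_sum _ (fun s _ => keyint _ s)]
    rw [Finset.sum_congr rfl (fun s hs => key (Fin.succ v) s hs), ← Finset.mul_sum]
  -- ∫ W
  have hI2 : ∫ ω, W ω ∂ν = ∑ u : Fin (n+1), q u * F u := by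
    have hpt : W = fun ω => ∑ u : Fin (n+1), ∑ s ∈ 𝒮,
        (if ((V ω = u ∧ S ω = s) ∧ G ω) ∧ s u ∈ R k then (1:ℝ) else 0) := by
      funext ω
      rw [Finset.sum_eq_single_of_mem (V ω) (Finset.mem_univ _),
          Finset.sum_eq_single_of_mem (S ω) (hS𝒮 ω)]
      · rw [hW]
        by_cases h2 : G ω <;> by_cases h3 : S ω (V ω) ∈ R k <;> simp [h2, h3]
      · intro s _ hne
        simp only [ite_eq_right_iff]
        intro hcond
        exact absurd hcond.1.1.2 (Ne.symm hne)
      · intro u _ hne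
        refine Finset.sum_eq_zero (fun s _ => ?_)
        simp only [ite_eq_right_iff]
        intro hcond
        exact absurd hcond.1.1.1 (Ne.symm hne)
    rw [hpt, integral_finset_sum _ (fun u _ => integrable_finset_sum _ (fun s _ => keyint u s))]
    refine Finset.sum_congr rfl (fun u _ => ?_)
    rw [integral_finset_sum _ (fun s _ => keyint u s),
        Finset.sum_congr rfl (fun s hs => key u s hs), ← Finset.mul_sum]
  -- ∫ Z_v Z_k
  have hIZZ : ∀ v : Fin n, ∫ ω, Z ω v * Z ω k ∂ν
      = (if v = k then (1:ℝ) else 0) * q (Fin.succ v) := by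
    intro v
    by_cases h : v = k
    · subst h
      have hpt : (fun ω => Z ω v * Z ω v) = fun ω => if V ω = Fin.succ v then (1:ℝ) else 0 := by
        funext ω
        by_cases h1 : V ω = Fin.succ v <;> simp [hZ, h1]
      rw [hpt, integral_ind (hVset _), if_pos rfl, one_mul]
    · have hpt : (fun ω => Z ω v * Z ω k) = fun _ω => (0:ℝ) := by
        funext ω
        by_cases h1 : V ω = Fin.succ v <;> simp [hZ, h1, Fin.succ_inj, h]
      rw [hpt, integral_zero, if_neg h, zero_mul]
  -- structure of F
  set e : (Fin (n+1) → Fin (n+1)) → ℝ := fun s => if s 0 ∈ R k then 1 else 0 with he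
  set dd : (Fin (n+1) → Fin (n+1)) → ℝ :=
    fun s => (if s (Fin.succ k) ∈ R k then (1:ℝ) else 0) - e s with hdd
  have hstruct : ∀ s ∈ 𝒮, M s ≠ 0 →
      (∀ u, (if s u ∈ R k then (1:ℝ) else 0) = e s + dd s * (if u = Fin.succ k then 1 else 0))
        ∧ 0 ≤ dd s := by
    intro s hs hM
    have h0ne : ¬ ((0 : Fin (n+1)) = Fin.succ k) := fun hh => Fin.succ_ne_zero k hh.symm
    rcases hd s hs hM with h | h | h
    · constructor
      · intro u; simp [he, hdd, h u, h 0, h (Fin.succ k)]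
      · simp [he, hdd, h 0, h (Fin.succ k)]
    · constructor
      · intro u; simp [he, hdd, h u, h 0, h (Fin.succ k)]
      · simp [he, hdd, h 0, h (Fin.succ k)]
    · have h0 : ¬ (s 0 ∈ R k) := by rw [h 0]; exact h0ne
      have hk : s (Fin.succ k) ∈ R k := (h _).mpr rfl
      constructor
      · intro u
        by_cases hu : u = Fin.succ k
        · simp [he, hdd, h u, hu, h0, hk]
        · simp [he, hdd, h u, hu, h0, hk]
      · simp [he, hdd, h0, hk]
  set E : ℝ := ∑ s ∈ 𝒮, (M s).toReal * e s with hE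
  set C : ℝ := ∑ s ∈ 𝒮, (M s).toReal * dd s with hC
  have hCnn : 0 ≤ C := by
    refine Finset.sum_nonneg (fun s hs => ?_)
    by_cases hM : M s = 0
    · simp [hM]
    · exact mul_nonneg ENNReal.toReal_nonneg (hstruct s hs hM).2
  have hFu : ∀ u, F u = E + C * (if u = Fin.succ k then 1 else 0) := by
    intro u
    have : ∀ s ∈ 𝒮, (M s).toReal * (if s u ∈ R k then (1:ℝ) else 0)
        = (M s).toReal * e s + ((M s).toReal * dd s) * (if u = Fin.succ k then 1 else 0) := by
      intro s hs
      by_cases hM : M s = 0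
      · simp [hM]
      · rw [(hstruct s hs hM).1 u]; ring
    calc F u = ∑ s ∈ 𝒮, (M s).toReal * (if s u ∈ R k then (1:ℝ) else 0) := rfl
      _ = ∑ s ∈ 𝒮, ((M s).toReal * e s + ((M s).toReal * dd s) * (if u = Fin.succ k then 1 else 0)) :=
          Finset.sum_congr rfl this
      _ = E + C * (if u = Fin.succ k then 1 else 0) := by
          rw [Finset.sum_add_distrib, ← Finset.sum_mul]
  have hsum2 : ∑ u : Fin (n+1), q u * F u = E + C * q (Fin.succ k) := by
    have h1 : ∀ u : Fin (n+1), q u * F u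
        = q u * E + (if u = Fin.succ k then C * q u else 0) := by
      intro u
      rw [hFu u]
      by_cases hu : u = Fin.succ k <;> simp [hu] <;> ring
    rw [Finset.sum_congr rfl (fun u _ => h1 u), Finset.sum_add_distrib, ← Finset.sum_mul, hqsum,
        one_mul]
    congr 1
    rw [Finset.sum_ite_eq' Finset.univ (Fin.succ k) (fun u => C * q u)]
    simp
  refine ⟨C, hCnn, fun v => ?_⟩
  have hZZv : covar ν (fun ω => Z ω v) (fun ω => Z ω k)
      = q (Fin.succ v) * ((if v = k then (1:ℝ) else 0) - q (Fin.succ k)) := by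
    unfold covar
    rw [hIZZ v, hZint v, hZint k]
    ring
  have hsvk : (if Fin.succ v = Fin.succ k then (1:ℝ) else 0) = (if v = k then (1:ℝ) else 0) := by
    by_cases h : v = k <;> simp [h, Fin.succ_inj]
  rw [hZZv]
  unfold covar
  rw [hI1 v, hZint v, hI2, hsum2, hFu, hsvk]
  ring

lemma lemA {n : ℕ} (A : Matrix (Fin n) (Fin n) ℝ) (c : Fin n → ℝ) (hc : ∀ i, 0 ≤ c i) :
    IsNonnegDiagonal (A⁻¹ * (A * Matrix.diagonal c)) := by
  by_cases h : IsUnit A.det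
  · rw [← Matrix.mul_assoc, Matrix.nonsing_inv_mul A h, Matrix.one_mul]
    refine ⟨fun i j hij => Matrix.diagonal_apply_ne c hij, fun i => ?_⟩
    rw [Matrix.diagonal_apply_eq]
    exact hc i
  · rw [Matrix.nonsing_inv_apply_not_isUnit A h, Matrix.zero_mul]
    exact ⟨fun i j _ => rfl, fun i => le_refl 0⟩

lemma indepV {n : ℕ} {γ : Type*} [MeasurableSpace γ] (ν : Measure Ω) [IsProbabilityMeasure ν]
    (V : Ω → Fin (n+1)) (Z : Ω → Fin n → ℝ)
    (hZ : ∀ ω v, Z ω v = if V ω = Fin.succ v then (1:ℝ) else 0)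
    (g : Ω → γ) (h : IndepFun Z g ν) (u : Fin (n+1)) {C : Set γ} (hC : MeasurableSet C) :
    ν ({ω | V ω = u} ∩ g ⁻¹' C) = ν {ω | V ω = u} * ν (g ⁻¹' C) := by
  classical
  have hB : MeasurableSet {f : Fin n → ℝ | ∀ v, (f v = 1 ↔ u = Fin.succ v)} := by
    have : {f : Fin n → ℝ | ∀ v, (f v = 1 ↔ u = Fin.succ v)}
        = ⋂ v, {f : Fin n → ℝ | f v = 1 ↔ u = Fin.succ v} := by
      ext f; simp [Set.mem_iInter]
    rw [this]
    refine MeasurableSet.iInter (fun v => ?_)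
    by_cases hu : u = Fin.succ v
    · have : {f : Fin n → ℝ | f v = 1 ↔ u = Fin.succ v} = (fun f : Fin n → ℝ => f v) ⁻¹' {1} := by
        ext f; simp [hu]
      rw [this]; exact (measurable_pi_apply v) (measurableSet_singleton 1)
    · have : {f : Fin n → ℝ | f v = 1 ↔ u = Fin.succ v} = ((fun f : Fin n → ℝ => f v) ⁻¹' {1})ᶜ := by
        ext f; simp [hu]
      rw [this]; exact ((measurable_pi_apply v) (measurableSet_singleton 1)).compl
  have hpre : Z ⁻¹' {f : Fin n → ℝ | ∀ v, (f v = 1 ↔ u = Fin.succ v)} = {ω | V ω = u} := by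
    ext ω
    simp only [Set.mem_preimage, Set.mem_setOf_eq]
    constructor
    · intro hh
      by_cases h0 : u = 0
      · subst h0
        rcases Fin.eq_zero_or_eq_succ (V ω) with h1 | ⟨j, h1⟩
        · exact h1
        · exfalso
          have := (hh j).mp (by rw [hZ, if_pos h1])
          exact Fin.succ_ne_zero j this.symm
      · rcases Fin.exists_succ_eq.mpr h0 with ⟨j, hj⟩
        have := (hh j).mpr hj.symm
        rw [hZ] at this
        by_cases h1 : V ω = Fin.succ j
        · rw [h1, hj]
        · rw [if_neg h1] at this; norm_num at this
    · intro hh v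
      rw [hZ, hh]
      constructor
      · intro h1
        by_cases h2 : u = Fin.succ v
        · exact h2
        · rw [if_neg h2] at h1; norm_num at h1
      · intro h2; rw [if_pos h2]
  have := (ProbabilityTheory.indepFun_iff_measure_inter_preimage_eq_mul.mp h)
    _ C hB hC
  rw [hpre] at this
  exact this

theorem tsls_just_identified_stronger_tests
    (μ : Measure Ω) [IsProbabilityMeasure μ]
    {n : ℕ}
    (T : Ω → Fin (n + 1)) (Ypot : Fin (n + 1) → Ω → ℝ)
    (V : Ω → Fin (n + 1)) (Z : Ω → Fin n → ℝ)
    (𝒮 : Finset (Fin (n + 1) → Fin (n + 1)))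
    (S : Ω → Fin (n + 1) → Fin (n + 1))
    (R : Fin n → Finset (Fin (n + 1)))
    (D : Ω → Fin n → ℝ) (α : Ω → ℝ) (β : Ω → Fin n → ℝ)
    (afun : (Fin (n + 1) → ℝ) → ℝ) (bfun : Fin n → (Fin (n + 1) → ℝ) → ℝ)
    -- measurability and integrability
    (hVmeas : Measurable V)
    (hSmeas : ∀ s, MeasurableSet {ω | S ω = s})
    (hYmeas : Measurable (fun ω => Ypot (T ω) ω))
    (hYint : Integrable (fun ω => Ypot (T ω) ω) μ)
    -- instruments built from the randomly assigned instrument value V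
    (hZ : ∀ ω v, Z ω v = if V ω = Fin.succ v then (1 : ℝ) else 0)
    (hVpos : ∀ v, 0 < μ {ω | V ω = v})
    -- response types, treatment indicators, outcome equation
    (hS𝒮 : ∀ ω, S ω ∈ 𝒮)
    (hTS : ∀ ω, T ω = S ω (V ω))
    (hD : ∀ ω k, D ω k = if T ω ∈ R k then (1 : ℝ) else 0)
    (hα : ∀ ω, α ω = afun fun j => Ypot j ω)
    (hβ : ∀ ω k, β ω k = bfun k fun j => Ypot j ω)
    (hY : ∀ ω, Ypot (T ω) ω = α ω + ∑ k, D ω k * β ω k)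
    -- Assumption 1 (exogeneity and exclusion)
    (hindep : IndepFun (fun ω => ((fun j => Ypot j ω), S ω)) V μ)
    -- Assumption 2 (rank): Cov(Z,D) is invertible
    (hrank : IsUnit (covarM μ Z D).det)
    -- Assumption 5 (labeling normalization): instrument k only affects treatment k
    (hnorm : ∀ k : Fin n, ∀ s ∈ 𝒮, 0 < μ {ω | S ω = s} →
      (∀ v, s v ∉ R k) ∨ (∀ v, s v ∈ R k) ∨ (∀ v, s v ∈ R k ↔ v = Fin.succ k)) :
    -- (i) unordered case: Kitagawa-style test with Z in place of P
    ((∀ k : Fin n, ∀ t : Fin (n + 1), t ∈ R k ↔ t = Fin.succ k) →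
      ∀ y y' : ℝ, y ≤ y' →
        IsNonnegDiagonal
          ((covarM μ Z Z)⁻¹ *
            covarM μ Z
              (fun ω k =>
                (if y ≤ Ypot (T ω) ω ∧ Ypot (T ω) ω ≤ y' then (1 : ℝ) else 0) *
                  D ω k))) ∧
    -- (ii) subsample test with Z in place of P
    (∀ X : Ω → Bool, Measurable X → 0 < μ {ω | X ω = true} →
      IndepFun Z (fun ω => (X ω, S ω)) μ →
        IsNonnegDiagonal
          ((covarM (μ[|{ω | X ω = true}]) Z Z)⁻¹ *
            covarM (μ[|{ω | X ω = true}]) Z D)) := by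
  classical
  have hVset : ∀ u : Fin (n + 1), MeasurableSet {ω | V ω = u} :=
    fun u => hVmeas (measurableSet_singleton u)
  constructor
  · -- Part (i)
    intro hunord y y' _hyy'
    have hGm : MeasurableSet {ω | y ≤ Ypot (T ω) ω ∧ Ypot (T ω) ω ≤ y'} := by
      have h1 : {ω | y ≤ Ypot (T ω) ω ∧ Ypot (T ω) ω ≤ y'}
          = (fun ω => Ypot (T ω) ω) ⁻¹' (Set.Icc y y') := rfl
      rw [h1]; exact hYmeas measurableSet_Icc
    have hcore : ∀ k : Fin n, ∃ c : ℝ, 0 ≤ c ∧ ∀ v,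
        covar μ (fun ω => Z ω v)
          (fun ω => (if y ≤ Ypot (T ω) ω ∧ Ypot (T ω) ω ≤ y' then (1:ℝ) else 0) * D ω k)
          = covar μ (fun ω => Z ω v) (fun ω => Z ω k) * c := by
      intro k
      set Bs : (Fin (n+1) → Fin (n+1)) → Set ((Fin (n+1) → ℝ) × (Fin (n+1) → Fin (n+1))) :=
        fun s => {p | (y ≤ p.1 (Fin.succ k) ∧ p.1 (Fin.succ k) ≤ y') ∧ p.2 = s} with hBsdef
    
      refine core_lemma μ V hVmeas 𝒮 S hS𝒮 hSmeas R Z hZ k _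
        (fun ω => y ≤ Ypot (T ω) ω ∧ Ypot (T ω) ω ≤ y') hGm ?_
        (fun s => μ ((fun ω => ((fun j => Ypot j ω), S ω)) ⁻¹' Bs s)) ?_ ?_
      · intro ω
        have h2 : S ω (V ω) = T ω := (hTS ω).symm
        rw [hD ω k, h2]
        congr
      · -- hfac
        intro s hs u hu
        have hsu : s u = Fin.succ k := (hunord k (s u)).mp hu
        have hBsm : MeasurableSet (Bs s) := by
          refine MeasurableSet.inter ?_ ?_
          · exact ((measurable_pi_apply (Fin.succ k)).comp measurable_fst) measurableSet_Icc
          · exact measurable_snd (measurableSet_singleton s)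
        have hset : {ω | V ω = u} ∩ {ω | S ω = s}
              ∩ {ω | y ≤ Ypot (T ω) ω ∧ Ypot (T ω) ω ≤ y'}
            = (fun ω => ((fun j => Ypot j ω), S ω)) ⁻¹' Bs s ∩ V ⁻¹' {u} := by
          ext ω
          simp only [Set.mem_inter_iff, Set.mem_setOf_eq, Set.mem_preimage,
            Set.mem_singleton_iff, hBsdef]
          constructor
          · rintro ⟨⟨hVu, hSs⟩, hG⟩
            have hT : T ω = Fin.succ k := by rw [hTS, hVu, hSs, hsu]
            rw [hT] at hG
            exact ⟨⟨hG, hSs⟩, hVu⟩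
          · rintro ⟨⟨hG, hSs⟩, hVu⟩
            have hT : T ω = Fin.succ k := by rw [hTS, hVu, hSs, hsu]
            refine ⟨⟨hVu, hSs⟩, ?_⟩
            rw [hT]; exact hG
        have hii := (ProbabilityTheory.indepFun_iff_measure_inter_preimage_eq_mul.mp hindep)
          (Bs s) {u} hBsm (measurableSet_singleton u)
        rw [hset, hii, mul_comm]
        rfl
      · -- hd
        intro s hs hM
        refine hnorm k s hs ?_
        have hle : μ ((fun ω => ((fun j => Ypot j ω), S ω)) ⁻¹' Bs s) ≤ μ {ω | S ω = s} :=
          measure_mono (fun ω hω => hω.2)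
        exact lt_of_lt_of_le (pos_iff_ne_zero.mpr hM) hle
    choose c hc0 hcv using hcore
    have hmat : covarM μ Z
        (fun ω k => (if y ≤ Ypot (T ω) ω ∧ Ypot (T ω) ω ≤ y' then (1:ℝ) else 0) * D ω k)
        = covarM μ Z Z * Matrix.diagonal c := by
      ext v k'
      rw [Matrix.mul_diagonal]
      exact hcv k' v
    rw [hmat]
    exact lemA _ c hc0
  · -- Part (ii)
    intro X hXmeas hXpos hindep2
    have hAm : MeasurableSet {ω | X ω = true} := hXmeas (measurableSet_singleton true)
    have hA0 : μ {ω | X ω = true} ≠ 0 := hXpos.ne'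
    haveI : IsProbabilityMeasure (μ[|{ω | X ω = true}]) := cond_isProbabilityMeasure hA0
    have hind : ∀ (u : Fin (n+1)) (Cs : Set (Bool × (Fin (n+1) → Fin (n+1)))), MeasurableSet Cs →
        μ ({ω | V ω = u} ∩ (fun ω => (X ω, S ω)) ⁻¹' Cs)
          = μ {ω | V ω = u} * μ ((fun ω => (X ω, S ω)) ⁻¹' Cs) :=
      fun u Cs hCs => indepV μ V Z hZ _ hindep2 u hCs
    have hC1m : ∀ s : Fin (n+1) → Fin (n+1),
        MeasurableSet {p : Bool × (Fin (n+1) → Fin (n+1)) | p.1 = true ∧ p.2 = s} :=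
      fun s => (measurable_fst (measurableSet_singleton true)).inter
        (measurable_snd (measurableSet_singleton s))
    have hC2m : MeasurableSet {p : Bool × (Fin (n+1) → Fin (n+1)) | p.1 = true} :=
      measurable_fst (measurableSet_singleton true)
    have hgpre1 : ∀ s : Fin (n+1) → Fin (n+1),
        (fun ω => (X ω, S ω)) ⁻¹' {p | p.1 = true ∧ p.2 = s}
          = {ω | X ω = true} ∩ {ω | S ω = s} := fun _ => rfl
    have hgpre2 : (fun ω => (X ω, S ω)) ⁻¹' {p : Bool × (Fin (n+1) → Fin (n+1)) | p.1 = true}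
        = {ω | X ω = true} := rfl
    have hqA : ∀ u, μ[|{ω | X ω = true}] {ω | V ω = u} = μ {ω | V ω = u} := by
      intro u
      rw [cond_apply hAm]
      have h1 : {ω | X ω = true} ∩ {ω | V ω = u}
          = {ω | V ω = u} ∩ (fun ω => (X ω, S ω)) ⁻¹' {p | p.1 = true} := by
        rw [hgpre2, Set.inter_comm]
      rw [h1, hind u _ hC2m, hgpre2, mul_comm (μ {ω | V ω = u}) (μ {ω | X ω = true}),
        ← mul_assoc, ENNReal.inv_mul_cancel hA0 (measure_ne_top μ _), one_mul]
    have hfac2 : ∀ (s : Fin (n+1) → Fin (n+1)) (u : Fin (n+1)),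
        μ[|{ω | X ω = true}] ({ω | V ω = u} ∩ {ω | S ω = s})
          = μ {ω | V ω = u} * μ[|{ω | X ω = true}] {ω | S ω = s} := by
      intro s u
      rw [cond_apply hAm, cond_apply hAm]
      have h1 : {ω | X ω = true} ∩ ({ω | V ω = u} ∩ {ω | S ω = s})
          = {ω | V ω = u} ∩ (fun ω => (X ω, S ω)) ⁻¹' {p | p.1 = true ∧ p.2 = s} := by
        rw [hgpre1 s]
        ext ω
        simp only [Set.mem_inter_iff, Set.mem_setOf_eq]
        tauto
      rw [h1, hind u _ (hC1m s), hgpre1 s]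
      ring
    have hcore : ∀ k : Fin n, ∃ cc : ℝ, 0 ≤ cc ∧ ∀ v,
        covar (μ[|{ω | X ω = true}]) (fun ω => Z ω v) (fun ω => D ω k)
          = covar (μ[|{ω | X ω = true}]) (fun ω => Z ω v) (fun ω => Z ω k) * cc := by
      intro k
      refine core_lemma (μ[|{ω | X ω = true}]) V hVmeas 𝒮 S hS𝒮 hSmeas R Z hZ k _
        (fun _ => True) (MeasurableSet.const True) ?_
        (fun s => μ[|{ω | X ω = true}] {ω | S ω = s}) ?_ ?_
      · intro ω
        rw [hD ω k, hTS ω]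
        simp
      · intro s hs u _
        have h1 : {ω | (True : Prop)} = (Set.univ : Set Ω) := Set.setOf_true
        rw [h1, Set.inter_univ, hfac2 s u, hqA u]
      · intro s hs hM
        refine hnorm k s hs ?_
        rw [pos_iff_ne_zero]
        intro h0
        apply hM
        show μ[|{ω | X ω = true}] {ω | S ω = s} = 0
        rw [cond_apply hAm]
        have h2 : μ ({ω | X ω = true} ∩ {ω | S ω = s}) = 0 :=
          le_antisymm (le_trans (measure_mono Set.inter_subset_right) h0.le) zero_le
        rw [h2, mul_zero]
    choose c hc0 hcv using hcore
    have hmat : covarM (μ[|{ω | X ω = true}]) Z D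
        = covarM (μ[|{ω | X ω = true}]) Z Z * Matrix.diagonal c := by
      ext v k'
      rw [Matrix.mul_diagonal]
      exact hcv k' v
    rw [hmat]
    exact lemA _ c hc0

end
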